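/- Let (X, 𝒜) be a measurable space, {m_x}_{x∈X} a family of probability measures on X, ρ_0, ρ_1 finite measures on X, and Ψ:[0,1]→[0,1] concave and non-decreasing. Define ProbPer_Ψ(A) := ∫_{Aᶜ} Ψ(m_x(A)) dρ_0(x) + ∫_A Ψ(m_x(Aᶜ)) dρ_1(x). Then ProbPer_Ψ is submodular: for all measurable A, B, ProbPer_Ψ(A∪B) + ProbPer_Ψ(A∩B) ≤ ProbPer_Ψ(A) + ProbPer_Ψ(B). -/
import Mathlib


open MeasureTheory ENNReal

lemma quad_concave {Ψ : ℝ → ℝ} (hconc : ConcaveOn ℝ (Set.Icc (0:ℝ) 1) Ψ)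
    {i a b u : ℝ} (hi : i ∈ Set.Icc (0:ℝ) 1) (hu : u ∈ Set.Icc (0:ℝ) 1)
    (hia : i ≤ a) (hau : a ≤ u) (hsum : u + i = a + b) :
    Ψ u + Ψ i ≤ Ψ a + Ψ b := by
  by_cases hiu : i = u
  · have ha : a = u := le_antisymm hau (hiu ▸ hia)
    have hb : b = u := by rw [ha] at hsum; linarith
    rw [ha, hb, hiu]
  · have hlt : i < u := lt_of_le_of_ne (hia.trans hau) hiu
    have hne : u - i ≠ 0 := ne_of_gt (by linarith)
    set t := (u - a) / (u - i) with htdef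
    have ht0 : 0 ≤ t := div_nonneg (by linarith) (by linarith)
    have ht1 : t ≤ 1 := (div_le_one (by linarith)).2 (by linarith)
    have htm : t * (u - i) = u - a := div_mul_cancel₀ _ hne
    have hta : t * i + (1 - t) * u = a := by
      have h : t * i + (1 - t) * u = u - t * (u - i) := by ring
      rw [h, htm]; ring
    have htb : (1 - t) * i + t * u = b := by
      have h : (1 - t) * i + t * u = i + t * (u - i) := by ring
      rw [h, htm]; linarith
    have h1 := hconc.2 hi hu ht0 (by linarith : (0:ℝ) ≤ 1 - t) (by ring)
    have h2 := hconc.2 hi hu (by linarith : (0:ℝ) ≤ 1 - t) ht0 (by ring)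
    rw [smul_eq_mul, smul_eq_mul, smul_eq_mul, smul_eq_mul, hta] at h1
    rw [smul_eq_mul, smul_eq_mul, smul_eq_mul, smul_eq_mul, htb] at h2
    linarith

lemma part_submod {X : Type*} [MeasurableSpace X]
    (m : X → Measure X) (hm : ∀ x, IsProbabilityMeasure (m x))
    (hmeas : ∀ S : Set X, MeasurableSet S → Measurable fun x => (m x S).toReal)
    (μ : Measure X) [IsFiniteMeasure μ]
    (Ψ : ℝ → ℝ)
    (hconc : ConcaveOn ℝ (Set.Icc (0:ℝ) 1) Ψ)
    (hmono : MonotoneOn Ψ (Set.Icc (0:ℝ) 1))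
    (hrange : ∀ t ∈ Set.Icc (0:ℝ) 1, Ψ t ∈ Set.Icc (0:ℝ) 1)
    (A B : Set X) (hA : MeasurableSet A) (hB : MeasurableSet B) :
    (∫ x in (A ∪ B)ᶜ, Ψ ((m x (A ∪ B)).toReal) ∂μ)
      + ∫ x in (A ∩ B)ᶜ, Ψ ((m x (A ∩ B)).toReal) ∂μ
    ≤ (∫ x in Aᶜ, Ψ ((m x A).toReal) ∂μ)
      + ∫ x in Bᶜ, Ψ ((m x B).toReal) ∂μ := by
  have hmemIcc : ∀ (x : X) (S : Set X), (m x S).toReal ∈ Set.Icc (0:ℝ) 1 := by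
    intro x S
    haveI := hm x
    refine ⟨ENNReal.toReal_nonneg, ?_⟩
    have h1 : m x S ≤ 1 := prob_le_one
    calc (m x S).toReal ≤ (1 : ℝ≥0∞).toReal := ENNReal.toReal_mono ENNReal.one_ne_top h1
      _ = 1 := by simp
  have hmeasΨ : ∀ S : Set X, MeasurableSet S →
      Measurable (fun x => Ψ ((m x S).toReal)) := by
    intro S hS
    have hc : Monotone (fun t : ℝ => Ψ (max 0 (min t 1))) := by
      intro s t hst
      have hmem : ∀ r : ℝ, max 0 (min r 1) ∈ Set.Icc (0:ℝ) 1 :=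
        fun r => ⟨le_max_left _ _, max_le zero_le_one (min_le_right _ _)⟩
      exact hmono (hmem s) (hmem t)
        (max_le_max le_rfl (min_le_min hst le_rfl))
    have : (fun x => Ψ ((m x S).toReal))
        = (fun t : ℝ => Ψ (max 0 (min t 1))) ∘ (fun x => (m x S).toReal) := by
      funext x
      have h := hmemIcc x S
      simp only [Function.comp_apply, min_eq_left h.2, max_eq_right h.1]
    rw [this]
    exact hc.measurable.comp (hmeas S hS)
  have hint : ∀ S T : Set X, MeasurableSet S → MeasurableSet T →
      Integrable (S.indicator fun x => Ψ ((m x T).toReal)) μ := by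
    intro S T hS hT
    refine Integrable.mono' (integrable_const 1)
      (((hmeasΨ T hT).indicator hS).aestronglyMeasurable) ?_
    filter_upwards with x
    rw [Real.norm_eq_abs]
    by_cases hx : x ∈ S
    · rw [Set.indicator_of_mem hx]
      have h := hrange _ (hmemIcc x T)
      rw [abs_le]; exact ⟨by linarith [h.1], h.2⟩
    · rw [Set.indicator_of_notMem hx]; simp
  rw [← integral_indicator (hA.union hB).compl,
      ← integral_indicator (hA.inter hB).compl,
      ← integral_indicator hA.compl, ← integral_indicator hB.compl,
      ← integral_add (hint _ _ (hA.union hB).compl (hA.union hB))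
        (hint _ _ (hA.inter hB).compl (hA.inter hB)),
      ← integral_add (hint _ _ hA.compl hA) (hint _ _ hB.compl hB)]
  refine integral_mono
    ((hint _ _ (hA.union hB).compl (hA.union hB)).add
      (hint _ _ (hA.inter hB).compl (hA.inter hB)))
    ((hint _ _ hA.compl hA).add (hint _ _ hB.compl hB)) ?_
  intro x
  beta_reduce
  haveI := hm x
  have hfin : ∀ S : Set X, m x S ≠ ⊤ := fun S => measure_ne_top _ _
  have hsum : (m x (A ∪ B)).toReal + (m x (A ∩ B)).toReal
      = (m x A).toReal + (m x B).toReal := by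
    have h := measure_union_add_inter (μ := m x) A hB
    calc (m x (A ∪ B)).toReal + (m x (A ∩ B)).toReal
        = ((m x (A ∪ B)) + (m x (A ∩ B))).toReal :=
          (ENNReal.toReal_add (hfin _) (hfin _)).symm
      _ = ((m x A) + (m x B)).toReal := by rw [h]
      _ = (m x A).toReal + (m x B).toReal := ENNReal.toReal_add (hfin _) (hfin _)
  have hia : (m x (A ∩ B)).toReal ≤ (m x A).toReal :=
    ENNReal.toReal_mono (hfin _) (measure_mono Set.inter_subset_left)
  have hib : (m x (A ∩ B)).toReal ≤ (m x B).toReal :=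
    ENNReal.toReal_mono (hfin _) (measure_mono Set.inter_subset_right)
  have hau : (m x A).toReal ≤ (m x (A ∪ B)).toReal :=
    ENNReal.toReal_mono (hfin _) (measure_mono Set.subset_union_left)
  have hbu : (m x B).toReal ≤ (m x (A ∪ B)).toReal :=
    ENNReal.toReal_mono (hfin _) (measure_mono Set.subset_union_right)
  by_cases hxA : x ∈ A <;> by_cases hxB : x ∈ B
  · rw [Set.indicator_of_notMem (Set.notMem_compl_iff.mpr (show x ∈ A ∪ B from Or.inl hxA)),
      Set.indicator_of_notMem (Set.notMem_compl_iff.mpr (show x ∈ A ∩ B from ⟨hxA, hxB⟩)),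
      Set.indicator_of_notMem (Set.notMem_compl_iff.mpr hxA),
      Set.indicator_of_notMem (Set.notMem_compl_iff.mpr hxB)]
  · rw [Set.indicator_of_notMem (Set.notMem_compl_iff.mpr (show x ∈ A ∪ B from Or.inl hxA)),
      Set.indicator_of_mem (Set.mem_compl (show x ∉ A ∩ B from fun h => hxB h.2)),
      Set.indicator_of_notMem (Set.notMem_compl_iff.mpr hxA),
      Set.indicator_of_mem (Set.mem_compl hxB)]
    have := hmono (hmemIcc x (A ∩ B)) (hmemIcc x B) hib
    linarith
  · rw [Set.indicator_of_notMem (Set.notMem_compl_iff.mpr (show x ∈ A ∪ B from Or.inr hxB)),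
      Set.indicator_of_mem (Set.mem_compl (show x ∉ A ∩ B from fun h => hxA h.1)),
      Set.indicator_of_mem (Set.mem_compl hxA),
      Set.indicator_of_notMem (Set.notMem_compl_iff.mpr hxB)]
    have := hmono (hmemIcc x (A ∩ B)) (hmemIcc x A) hia
    linarith
  · rw [Set.indicator_of_mem (Set.mem_compl (show x ∉ A ∪ B from fun h => h.elim hxA hxB)),
      Set.indicator_of_mem (Set.mem_compl (show x ∉ A ∩ B from fun h => hxA h.1)),
      Set.indicator_of_mem (Set.mem_compl hxA),
      Set.indicator_of_mem (Set.mem_compl hxB)]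
    exact quad_concave hconc (hmemIcc x (A ∩ B)) (hmemIcc x (A ∪ B)) hia hau hsum

theorem stmt4 {X : Type*} [MeasurableSpace X]
    (m : X → Measure X) (hm : ∀ x, IsProbabilityMeasure (m x))
    (hmeas : ∀ S : Set X, MeasurableSet S → Measurable fun x => (m x S).toReal)
    (ρ₀ ρ₁ : Measure X) [IsFiniteMeasure ρ₀] [IsFiniteMeasure ρ₁]
    (Ψ : ℝ → ℝ)
    (hconc : ConcaveOn ℝ (Set.Icc (0:ℝ) 1) Ψ)
    (hmono : MonotoneOn Ψ (Set.Icc (0:ℝ) 1))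
    (hrange : ∀ t ∈ Set.Icc (0:ℝ) 1, Ψ t ∈ Set.Icc (0:ℝ) 1)
    (A B : Set X) (hA : MeasurableSet A) (hB : MeasurableSet B) :
    ((∫ x in (A ∪ B)ᶜ, Ψ ((m x (A ∪ B)).toReal) ∂ρ₀)
        + ∫ x in A ∪ B, Ψ ((m x (A ∪ B)ᶜ).toReal) ∂ρ₁)
      + ((∫ x in (A ∩ B)ᶜ, Ψ ((m x (A ∩ B)).toReal) ∂ρ₀)
        + ∫ x in A ∩ B, Ψ ((m x (A ∩ B)ᶜ).toReal) ∂ρ₁)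
    ≤ ((∫ x in Aᶜ, Ψ ((m x A).toReal) ∂ρ₀)
        + ∫ x in A, Ψ ((m x Aᶜ).toReal) ∂ρ₁)
      + ((∫ x in Bᶜ, Ψ ((m x B).toReal) ∂ρ₀)
        + ∫ x in B, Ψ ((m x Bᶜ).toReal) ∂ρ₁) := by
  have h0 := part_submod m hm hmeas ρ₀ Ψ hconc hmono hrange A B hA hB
  have h1 := part_submod m hm hmeas ρ₁ Ψ hconc hmono hrange Aᶜ Bᶜ hA.compl hB.compl
  rw [show Aᶜ ∪ Bᶜ = (A ∩ B)ᶜ by rw [Set.compl_inter],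
      show Aᶜ ∩ Bᶜ = (A ∪ B)ᶜ by rw [Set.compl_union],
      compl_compl, compl_compl, compl_compl, compl_compl] at h1
  linarith
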